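/- For every integer m ≥ 2, N_m = 4·N_{m−1} − 2·N_{m−2}. -/
import Mathlib


/-- `Lessdot l₁ l₂ s` means `l₁ + l₂ ⋖ s`: for every bit position `i`,
the binary digits satisfy `(l₁)ᵢ + (l₂)ᵢ ≤ (s)ᵢ`. -/
def Lessdot (l₁ l₂ s : ℕ) : Prop :=
  ∀ i : ℕ, (l₁.testBit i).toNat + (l₂.testBit i).toNat ≤ (s.testBit i).toNat

open scoped Classical in
/-- `BSet r s = B_s^{(r)} = {2^r·l₁ + l₂ : l₁ + l₂ ⋖ s}`.
(Note `l₁ + l₂ ⋖ s` forces `l₁, l₂ ≤ s`, so the ranges capture the whole set.) -/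
noncomputable def BSet (r s : ℕ) : Finset ℕ :=
  ((Finset.range (s + 1) ×ˢ Finset.range (s + 1)).filter
    (fun p => Lessdot p.1 p.2 s)).image (fun p => 2 ^ r * p.1 + p.2)

/-- `Nnum r m = N_m^{(r)} = Σ_{s=0}^{2^m−1} |B_s^{(r)}|`. -/
noncomputable def Nnum (r m : ℕ) : ℕ := ∑ s ∈ Finset.range (2 ^ m), (BSet r s).card

namespace Stmt7Aux

lemma toNat_testBit_zero (a : ℕ) : (a.testBit 0).toNat = a % 2 := by
  rw [Nat.testBit_zero]
  rcases Nat.mod_two_eq_zero_or_one a with h | h <;> simp [h]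

lemma lessdot_le_left {a b s : ℕ} (h : Lessdot a b s) : a ≤ s := by
  have key : a &&& s = a := Nat.eq_of_testBit_eq fun i => by
    have hi := h i
    rw [Nat.testBit_and]
    cases ha : a.testBit i <;> cases hs : s.testBit i <;> simp_all
  calc a = a &&& s := key.symm
    _ ≤ s := Nat.and_le_right

lemma lessdot_le_right {a b s : ℕ} (h : Lessdot a b s) : b ≤ s := by
  have key : b &&& s = b := Nat.eq_of_testBit_eq fun i => by
    have hi := h i
    rw [Nat.testBit_and]
    cases hb : b.testBit i <;> cases hs : s.testBit i <;> simp_all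
  calc b = b &&& s := key.symm
    _ ≤ s := Nat.and_le_right

lemma mem_BSet1 {s n : ℕ} :
    n ∈ BSet 1 s ↔ ∃ a b : ℕ, Lessdot a b s ∧ 2 * a + b = n := by
  classical
  simp only [BSet, Finset.mem_image, Finset.mem_filter, Finset.mem_product,
    Finset.mem_range, pow_one]
  constructor
  · rintro ⟨⟨a, b⟩, ⟨⟨-, -⟩, h⟩, rfl⟩
    exact ⟨a, b, h, rfl⟩
  · rintro ⟨a, b, h, rfl⟩
    exact ⟨(a, b), ⟨⟨Nat.lt_succ_of_le (lessdot_le_left h),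
      Nat.lt_succ_of_le (lessdot_le_right h)⟩, h⟩, rfl⟩

lemma lessdot_split {a b s u : ℕ} (hu : u ≤ 1) :
    Lessdot a b (2 * s + u) ↔ Lessdot (a / 2) (b / 2) s ∧ a % 2 + b % 2 ≤ u := by
  have hdiv : (2 * s + u) / 2 = s := by omega
  have hmod : (2 * s + u) % 2 = u := by omega
  constructor
  · intro h
    refine ⟨fun i => ?_, ?_⟩
    · have hi := h (i + 1)
      rwa [Nat.testBit_add_one, Nat.testBit_add_one, Nat.testBit_add_one, hdiv] at hi
    · have h0 := h 0
      rwa [toNat_testBit_zero, toNat_testBit_zero, toNat_testBit_zero, hmod] at h0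
  · rintro ⟨h, h0⟩ i
    cases i with
    | zero =>
      rw [toNat_testBit_zero, toNat_testBit_zero, toNat_testBit_zero, hmod]
      exact h0
    | succ i =>
      rw [Nat.testBit_add_one, Nat.testBit_add_one, Nat.testBit_add_one, hdiv]
      exact h i

lemma mem_BSet1_bit {t u n : ℕ} (hu : u ≤ 1) :
    n ∈ BSet 1 (2 * t + u) ↔
      ∃ x ∈ BSet 1 t, ∃ e₁ e₂ : ℕ, e₁ + e₂ ≤ u ∧ n = 2 * x + (2 * e₁ + e₂) := by
  rw [mem_BSet1]
  constructor
  · rintro ⟨a, b, h, rfl⟩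
    rw [lessdot_split hu] at h
    refine ⟨2 * (a / 2) + b / 2, mem_BSet1.2 ⟨a / 2, b / 2, h.1, rfl⟩,
      a % 2, b % 2, h.2, ?_⟩
    omega
  · rintro ⟨x, hx, e₁, e₂, he, rfl⟩
    obtain ⟨a', b', h', rfl⟩ := mem_BSet1.1 hx
    refine ⟨2 * a' + e₁, 2 * b' + e₂, ?_, by omega⟩
    rw [lessdot_split hu]
    constructor
    · have h1 : (2 * a' + e₁) / 2 = a' := by omega
      have h2 : (2 * b' + e₂) / 2 = b' := by omega
      rw [h1, h2]; exact h'
    · omega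

noncomputable def E (t : ℕ) : Finset ℕ := (BSet 1 t).image (fun x => 2 * x)
noncomputable def O (t : ℕ) : Finset ℕ := (BSet 1 t).image (fun x => 2 * x + 1)
noncomputable def E2 (t : ℕ) : Finset ℕ := (BSet 1 t).image (fun x => 2 * x + 2)

lemma card_E (t : ℕ) : (E t).card = (BSet 1 t).card :=
  Finset.card_image_of_injective _ (fun _ _ => by omega)
lemma card_O (t : ℕ) : (O t).card = (BSet 1 t).card :=
  Finset.card_image_of_injective _ (fun _ _ => by omega)
lemma card_E2 (t : ℕ) : (E2 t).card = (BSet 1 t).card :=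
  Finset.card_image_of_injective _ (fun _ _ => by omega)

lemma BSet_even (t : ℕ) : BSet 1 (2 * t) = E t := by
  ext n
  rw [show 2 * t = 2 * t + 0 by ring, mem_BSet1_bit (by norm_num)]
  simp only [E, Finset.mem_image]
  constructor
  · rintro ⟨x, hx, e₁, e₂, he, rfl⟩
    exact ⟨x, hx, by omega⟩
  · rintro ⟨x, hx, rfl⟩
    exact ⟨x, hx, 0, 0, by omega, by omega⟩

lemma BSet_odd (t : ℕ) : BSet 1 (2 * t + 1) = O t ∪ (E t ∪ E2 t) := by
  ext n
  rw [mem_BSet1_bit (le_refl 1)]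
  simp only [Finset.mem_union, E, O, E2, Finset.mem_image]
  constructor
  · rintro ⟨x, hx, e₁, e₂, he, rfl⟩
    have hcase : (e₁ = 0 ∧ e₂ = 0) ∨ (e₁ = 0 ∧ e₂ = 1) ∨ (e₁ = 1 ∧ e₂ = 0) := by omega
    rcases hcase with ⟨rfl, rfl⟩ | ⟨rfl, rfl⟩ | ⟨rfl, rfl⟩
    · exact Or.inr (Or.inl ⟨x, hx, by omega⟩)
    · exact Or.inl ⟨x, hx, by omega⟩
    · exact Or.inr (Or.inr ⟨x, hx, by omega⟩)
  · rintro (⟨x, hx, rfl⟩ | ⟨x, hx, rfl⟩ | ⟨x, hx, rfl⟩)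
    · exact ⟨x, hx, 0, 1, by omega, by omega⟩
    · exact ⟨x, hx, 0, 0, by omega, by omega⟩
    · exact ⟨x, hx, 1, 0, by omega, by omega⟩

open scoped Classical in
noncomputable def d (t : ℕ) : ℕ :=
  ((BSet 1 t).filter (fun x => x + 1 ∈ BSet 1 t)).card

lemma card_BSet_even (t : ℕ) : (BSet 1 (2 * t)).card = (BSet 1 t).card := by
  rw [BSet_even, card_E]

lemma inter_E_E2 (t : ℕ) :
    E t ∩ E2 t =
      Finset.image (fun y => 2 * y + 2) ((BSet 1 t).filter (fun y => y + 1 ∈ BSet 1 t)) := by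
  classical
  ext n
  simp only [Finset.mem_inter, E, E2, Finset.mem_image, Finset.mem_filter]
  constructor
  · rintro ⟨⟨x, hx, rfl⟩, ⟨y, hy, hxy⟩⟩
    have : x = y + 1 := by omega
    subst this
    exact ⟨y, ⟨hy, hx⟩, by omega⟩
  · rintro ⟨y, ⟨hy, hy1⟩, rfl⟩
    exact ⟨⟨y + 1, hy1, by omega⟩, ⟨y, hy, by omega⟩⟩

lemma card_inter_E_E2 (t : ℕ) : (E t ∩ E2 t).card = d t := by
  classical
  rw [inter_E_E2, Finset.card_image_of_injective _ (fun _ _ => by omega), d]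

lemma disjoint_O_even (t : ℕ) : Disjoint (O t) (E t ∪ E2 t) := by
  rw [Finset.disjoint_left]
  intro n hn hn'
  simp only [O, E, E2, Finset.mem_union, Finset.mem_image] at hn hn'
  obtain ⟨x, -, rfl⟩ := hn
  rcases hn' with ⟨y, -, hy⟩ | ⟨y, -, hy⟩ <;> omega

lemma disjoint_E_O (t : ℕ) : Disjoint (E t) (O t) := by
  rw [Finset.disjoint_left]
  intro n hn hn'
  simp only [O, E, Finset.mem_image] at hn hn'
  obtain ⟨x, -, rfl⟩ := hn
  obtain ⟨y, -, hy⟩ := hn'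
  omega

lemma card_BSet_odd (t : ℕ) :
    (BSet 1 (2 * t + 1)).card + d t = 3 * (BSet 1 t).card := by
  rw [BSet_odd, Finset.card_union_of_disjoint (disjoint_O_even t), card_O]
  have h := Finset.card_union_add_card_inter (E t) (E2 t)
  rw [card_inter_E_E2, card_E, card_E2] at h
  omega

lemma d_even (t : ℕ) : d (2 * t) = 0 := by
  classical
  rw [d, Finset.card_eq_zero, Finset.filter_eq_empty_iff]
  intro x hx hx1
  rw [BSet_even] at hx hx1
  simp only [E, Finset.mem_image] at hx hx1
  obtain ⟨y, -, rfl⟩ := hx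
  obtain ⟨z, -, hz⟩ := hx1
  omega

lemma d_odd (t : ℕ) : d (2 * t + 1) = 2 * (BSet 1 t).card := by
  classical
  have hset : (BSet 1 (2 * t + 1)).filter (fun x => x + 1 ∈ BSet 1 (2 * t + 1))
      = E t ∪ O t := by
    ext n
    simp only [Finset.mem_filter, Finset.mem_union]
    rw [BSet_odd]
    constructor
    · rintro ⟨hn, hn1⟩
      simp only [Finset.mem_union] at hn hn1
      rcases hn with hO | hE | hE2
      · exact Or.inr hO
      · exact Or.inl hE
      · simp only [E2, Finset.mem_image] at hE2
        obtain ⟨y, hy, rfl⟩ := hE2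
        rcases hn1 with hO' | hE' | hE2'
        · simp only [O, Finset.mem_image] at hO'
          obtain ⟨w, hw, hweq⟩ := hO'
          have : w = y + 1 := by omega
          subst this
          simp only [E, Finset.mem_image]
          exact Or.inl ⟨y + 1, hw, by omega⟩
        · simp only [E, Finset.mem_image] at hE'
          obtain ⟨w, -, hw⟩ := hE'
          omega
        · simp only [E2, Finset.mem_image] at hE2'
          obtain ⟨w, -, hw⟩ := hE2'
          omega
    · rintro (hE | hO)
      · simp only [E, Finset.mem_image] at hE
        obtain ⟨y, hy, rfl⟩ := hE
        refine ⟨Finset.mem_union.2 (Or.inr (Finset.mem_union.2 (Or.inl ?_))),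
          Finset.mem_union.2 (Or.inl ?_)⟩
        · simp only [E, Finset.mem_image]; exact ⟨y, hy, rfl⟩
        · simp only [O, Finset.mem_image]; exact ⟨y, hy, by omega⟩
      · simp only [O, Finset.mem_image] at hO
        obtain ⟨y, hy, rfl⟩ := hO
        refine ⟨Finset.mem_union.2 (Or.inl ?_),
          Finset.mem_union.2 (Or.inr (Finset.mem_union.2 (Or.inr ?_)))⟩
        · simp only [O, Finset.mem_image]; exact ⟨y, hy, rfl⟩
        · simp only [E2, Finset.mem_image]; exact ⟨y, hy, by omega⟩
  rw [d, hset, Finset.card_union_of_disjoint (disjoint_E_O t), card_E, card_O]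
  omega

lemma sum_range_two_mul (n : ℕ) (f : ℕ → ℕ) :
    ∑ i ∈ Finset.range (2 * n), f i = ∑ j ∈ Finset.range n, (f (2 * j) + f (2 * j + 1)) := by
  induction n with
  | zero => simp
  | succ n ih =>
    rw [show 2 * (n + 1) = 2 * n + 1 + 1 by ring, Finset.sum_range_succ,
      Finset.sum_range_succ, ih, Finset.sum_range_succ]
    ring

noncomputable def D (m : ℕ) : ℕ := ∑ t ∈ Finset.range (2 ^ m), d t

lemma rec1 (m : ℕ) : Nnum 1 (m + 1) + D m = 4 * Nnum 1 m := by
  have h2 : (2 : ℕ) ^ (m + 1) = 2 * 2 ^ m := by ring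
  rw [Nnum, D, h2, sum_range_two_mul, ← Finset.sum_add_distrib, Nnum,
    Finset.mul_sum]
  apply Finset.sum_congr rfl
  intro t _
  have h1 := card_BSet_even t
  have h3 := card_BSet_odd t
  omega

lemma rec2 (m : ℕ) : D (m + 1) = 2 * Nnum 1 m := by
  have h2 : (2 : ℕ) ^ (m + 1) = 2 * 2 ^ m := by ring
  rw [D, h2, sum_range_two_mul, Nnum, Finset.mul_sum]
  apply Finset.sum_congr rfl
  intro t _
  rw [d_even, d_odd]
  omega

lemma main_rec (k : ℕ) : Nnum 1 (k + 2) + 2 * Nnum 1 k = 4 * Nnum 1 (k + 1) := by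
  have h1 : Nnum 1 (k + 2) + D (k + 1) = 4 * Nnum 1 (k + 1) := rec1 (k + 1)
  have h2 := rec2 k
  omega

end Stmt7Aux

/-- For every `m ≥ 2`, `N_m = 4·N_{m−1} − 2·N_{m−2}` (as integers). -/
theorem stmt_7 (m : ℕ) (hm : 2 ≤ m) :
    (Nnum 1 m : ℤ) = 4 * Nnum 1 (m - 1) - 2 * Nnum 1 (m - 2) := by
  obtain ⟨k, rfl⟩ : ∃ k, m = k + 2 := ⟨m - 2, by omega⟩
  have h := Stmt7Aux.main_rec k
  have h1 : k + 2 - 1 = k + 1 := by omega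
  have h2 : k + 2 - 2 = k := by omega
  rw [h1, h2]
  have := congrArg (Nat.cast : ℕ → ℤ) h
  push_cast at this
  linarith
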